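/- Let F₁, F₂ be cdf's with finite means. Then second order stochastic dominance, ∫_{-∞}^{x} F₁(t) dt ≥ ∫_{-∞}^{x} F₂(t) dt for all x ∈ ℝ, holds if and only if the weak Lorenz ordering holds: ∫_{0}^{p} F₁⁻¹(α) dα ≤ ∫_{0}^{p} F₂⁻¹(α) dα for all p ∈ [0,1]. -/

import Mathlib

open MeasureTheory Set Filter Topology Function

noncomputable section

/-- A cumulative distribution function: non-decreasing, right-continuous,
with limit 0 at -∞ and limit 1 at +∞. -/
structure IsCDF (F : ℝ → ℝ) : Prop where
  mono : Monotone F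
  right_cont : ∀ x, ContinuousWithinAt F (Ici x) x
  tendsto_atBot : Tendsto F atBot (𝓝 0)
  tendsto_atTop : Tendsto F atTop (𝓝 1)

/-- The quantile function `F⁻¹ (α) = inf {x | F x ≥ α}`. -/
def qf (F : ℝ → ℝ) (α : ℝ) : ℝ := sInf {x | α ≤ F x}

/-- `(u₀, v₀)` is a standard pair: `u₀ : ℝ → ℝ` non-decreasing left-continuous,
`v₀ : [0,1] → [0,1]` non-decreasing right-continuous with `v₀ 0 = 0` and `v₀ (1⁻) = 1`. -/
structure StandardPair (u₀ v₀ : ℝ → ℝ) : Prop where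
  u_mono : Monotone u₀
  u_left_cont : ∀ x, ContinuousWithinAt u₀ (Iic x) x
  v_mono : MonotoneOn v₀ (Icc 0 1)
  v_right_cont : ∀ α ∈ Ico (0:ℝ) 1, Tendsto v₀ (𝓝[>] α) (𝓝 (v₀ α))
  v_mem : ∀ α ∈ Icc (0:ℝ) 1, v₀ α ∈ Icc (0:ℝ) 1
  v_zero : v₀ 0 = 0
  v_one : Tendsto v₀ (𝓝[<] (1:ℝ)) (𝓝 1)

/-- `μ` is the Lebesgue–Stieltjes measure of the left-continuous integrator `g` on `ℝ`:
`μ [a,b) = g b - g a`. -/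
def IsLSL (g : ℝ → ℝ) (μ : Measure ℝ) : Prop :=
  ∀ a b : ℝ, a ≤ b → μ (Ico a b) = ENNReal.ofReal (g b - g a)

/-- `μ` is the Lebesgue–Stieltjes measure of the right-continuous integrator `g` on `ℝ`:
`μ (a,b] = g b - g a`. -/
def IsLSR (g : ℝ → ℝ) (μ : Measure ℝ) : Prop :=
  ∀ a b : ℝ, a ≤ b → μ (Ioc a b) = ENNReal.ofReal (g b - g a)

/-- `μ` behaves on `[0,1]` as the Lebesgue–Stieltjes measure of the right-continuous
integrator `g`: `μ (a,b] = g b - g a` for `0 ≤ a ≤ b ≤ 1`. -/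
def IsLSR01 (g : ℝ → ℝ) (μ : Measure ℝ) : Prop :=
  ∀ a b : ℝ, 0 ≤ a → a ≤ b → b ≤ 1 → μ (Ioc a b) = ENNReal.ofReal (g b - g a)

/-- `μ` behaves inside `(0,1)` as the Lebesgue–Stieltjes measure of the left-continuous
integrator `g`: `μ [a,b) = g b - g a` for `0 < a ≤ b < 1`. -/
def IsLSL01 (g : ℝ → ℝ) (μ : Measure ℝ) : Prop :=
  ∀ a b : ℝ, 0 < a → a ≤ b → b < 1 → μ (Ico a b) = ENNReal.ofReal (g b - g a)

/-- `u` has density `k` with respect to the Stieltjes measure `μ₀` of `u₀`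
(left-continuous convention `[a,b)`), i.e. `du = k du₀`:
`u b - u a = ∫_{[a,b)} k dμ₀` for all `a ≤ b`. -/
def HasDensity (u k : ℝ → ℝ) (μ₀ : Measure ℝ) : Prop :=
  ∀ a b : ℝ, a ≤ b → u b - u a = ∫ s in Ico a b, k s ∂μ₀

/-- The upper `(u₀,v₀)`-ordering `F₁ ≺^{(u₀,v₀)} F₂`:
`∫ v₀(F₁) du ≥ ∫ v₀(F₂) du` for every non-decreasing `u₀`-concave `u`, where such a `u`
is encoded through its Radon–Nikodym density `k = du/du₀` (bounded, non-negative,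
non-increasing), so that `du = k dμ₀`.  Here `μ₀` is the Stieltjes measure of `u₀`. -/
def UpperOrder (v₀ F₁ F₂ : ℝ → ℝ) (μ₀ : Measure ℝ) : Prop :=
  ∀ k : ℝ → ℝ, Antitone k → (∀ x, 0 ≤ k x) → (∃ C, ∀ x, k x ≤ C) →
    ∫⁻ x, ENNReal.ofReal (v₀ (F₂ x)) ∂(μ₀.withDensity fun x => ENNReal.ofReal (k x)) ≤
      ∫⁻ x, ENNReal.ofReal (v₀ (F₁ x)) ∂(μ₀.withDensity fun x => ENNReal.ofReal (k x))

/-- The lower `(u₀,v₀)`-ordering `F₁ ≺_{(u₀,v₀)} F₂`: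
`-∫ (1 - v₀(F₁)) du ≥ -∫ (1 - v₀(F₂)) du` for every non-decreasing `u₀`-convex `u`,
encoded through its density `m = du/du₀` (non-negative, non-decreasing). -/
def LowerOrder (v₀ F₁ F₂ : ℝ → ℝ) (μ₀ : Measure ℝ) : Prop :=
  ∀ m : ℝ → ℝ, Monotone m → (∀ x, 0 ≤ m x) →
    ∫⁻ x, ENNReal.ofReal (1 - v₀ (F₁ x)) ∂(μ₀.withDensity fun x => ENNReal.ofReal (m x)) ≤
      ∫⁻ x, ENNReal.ofReal (1 - v₀ (F₂ x)) ∂(μ₀.withDensity fun x => ENNReal.ofReal (m x))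

/-- Condition (a): `∫_ℝ |u₀(x)| dv₀(F(x)) < ∞`, where `ν` is the Stieltjes measure
of `v₀ ∘ F`. -/
def CondA (u₀ : ℝ → ℝ) (ν : Measure ℝ) : Prop :=
  ∫⁻ x, ENNReal.ofReal |u₀ x| ∂ν < ⊤

/-- Condition (b): `∫_{[0,p)} v₀(α) du₀(F⁻¹(α)) < ∞` for all `p < 1`, where `lam` is the
Stieltjes measure of `u₀ ∘ F⁻¹` on `(0,1)`. -/
def CondB (v₀ : ℝ → ℝ) (lam : Measure ℝ) : Prop :=
  ∀ p : ℝ, p < 1 → ∫⁻ α in Ioo 0 p, ENNReal.ofReal (v₀ α) ∂lam < ⊤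

/-- Condition (b)': `∫_ℝ (1 - v₀(F(x))) du₀(x) < ∞`, where `μ₀` is the Stieltjes
measure of `u₀`. -/
def CondB' (v₀ F : ℝ → ℝ) (μ₀ : Measure ℝ) : Prop :=
  ∫⁻ x, ENNReal.ofReal (1 - v₀ (F x)) ∂μ₀ < ⊤


open scoped ENNReal

variable {F : ℝ → ℝ}

lemma cdf_nonneg (hF : IsCDF F) (x : ℝ) : 0 ≤ F x := by
  refine le_of_tendsto hF.tendsto_atBot ?_
  filter_upwards [eventually_le_atBot x] with y hy using hF.mono hy

lemma cdf_le_one (hF : IsCDF F) (x : ℝ) : F x ≤ 1 := by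
  refine ge_of_tendsto hF.tendsto_atTop ?_
  filter_upwards [eventually_ge_atTop x] with y hy using hF.mono hy

lemma qf_nonempty (hF : IsCDF F) {α : ℝ} (hα : α < 1) : {x | α ≤ F x}.Nonempty := by
  have : ∀ᶠ y in atTop, α < F y := hF.tendsto_atTop.eventually (eventually_gt_nhds hα)
  rcases this.exists with ⟨y, hy⟩
  exact ⟨y, hy.le⟩

lemma qf_bdd (hF : IsCDF F) {α : ℝ} (hα : 0 < α) : BddBelow {x | α ≤ F x} := by
  have : ∀ᶠ y in atBot, F y < α := hF.tendsto_atBot.eventually (eventually_lt_nhds hα)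
  rcases this.exists with ⟨y, hy⟩
  refine ⟨y, fun s hs => ?_⟩
  by_contra h
  exact absurd (le_trans hs (hF.mono (le_of_not_ge h))) (not_le.2 hy)

lemma qf_le_iff (hF : IsCDF F) {α : ℝ} (hα : α ∈ Ioo (0:ℝ) 1) {x : ℝ} :
    qf F α ≤ x ↔ α ≤ F x := by
  constructor
  · intro h
    have hup : ∀ y, x < y → α ≤ F y := by
      intro y hy
      have : qf F α < y := lt_of_le_of_lt h hy
      rcases exists_lt_of_csInf_lt (qf_nonempty hF hα.2) this with ⟨s, hs, hsy⟩
      exact le_trans hs (hF.mono hsy.le)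
    have ht : Tendsto F (𝓝[>] x) (𝓝 (F x)) :=
      ((hF.right_cont x).mono (Ioi_subset_Ici le_rfl)).tendsto
    refine ge_of_tendsto ht ?_
    filter_upwards [self_mem_nhdsWithin] with y hy using hup y hy
  · intro h
    exact csInf_le (qf_bdd hF hα.1) h

lemma qf_mono (hF : IsCDF F) : MonotoneOn (qf F) (Ioo 0 1) := by
  intro a ha b hb hab
  exact csInf_le_csInf (qf_bdd hF ha.1) (qf_nonempty hF hb.2)
    (fun x hx => le_trans hab hx)

/-- Measurable extension of `qf F` that agrees with it on `Ioo 0 1`. -/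
def qfz (F : ℝ → ℝ) : ℝ → ℝ := (Ioo 0 1).indicator (qf F)

lemma qfz_eq (α : ℝ) (hα : α ∈ Ioo (0:ℝ) 1) : qfz F α = qf F α := indicator_of_mem hα _

lemma qfz_meas (hF : IsCDF F) : Measurable (qfz F) := by
  apply measurable_of_Iic
  intro t
  have : qfz F ⁻¹' Iic t =
      (Ioo 0 1 ∩ Iic (F t)) ∪ ((Ioo 0 1)ᶜ ∩ {α : ℝ | (0:ℝ) ≤ t}) := by
    ext α
    by_cases hα : α ∈ Ioo (0:ℝ) 1
    · simp only [mem_preimage, mem_Iic, qfz_eq α hα, mem_union, mem_inter_iff, hα,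
        mem_compl_iff, not_true, false_and, or_false, true_and, mem_setOf_eq]
      exact qf_le_iff hF hα
    · simp [qfz, indicator_of_notMem hα, hα]
  rw [this]
  by_cases h0 : (0:ℝ) ≤ t
  · have : {α : ℝ | (0:ℝ) ≤ t} = univ := by simp [h0]
    rw [this]
    exact (measurableSet_Ioo.inter measurableSet_Iic).union
      (measurableSet_Ioo.compl.inter MeasurableSet.univ)
  · have : {α : ℝ | (0:ℝ) ≤ t} = ∅ := by simp [h0]
    rw [this]
    simpa using (measurableSet_Ioo.inter measurableSet_Iic).union
      (measurableSet_Ioo.compl.inter MeasurableSet.empty)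
variable {mF : Measure ℝ}

lemma mF_Iic (hF : IsCDF F) (hmF : IsLSR F mF) (b : ℝ) :
    mF (Iic b) = ENNReal.ofReal (F b) := by
  have hU : Iic b = ⋃ n : ℕ, Ioc (b - (n+1)) b := by
    ext t
    simp only [mem_Iic, mem_iUnion, mem_Ioc]
    constructor
    · intro h
      rcases exists_nat_gt (b - t) with ⟨n, hn⟩
      exact ⟨n, by linarith [Nat.cast_nonneg (α := ℝ) n], h⟩
    · rintro ⟨n, h1, h2⟩; exact h2
  have hmono : Monotone fun n : ℕ => Ioc (b - (n+1)) b := by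
    intro m n hmn
    apply Ioc_subset_Ioc_left
    have : (m:ℝ) ≤ n := Nat.cast_le.2 hmn
    linarith
  have h1 : Tendsto (fun n : ℕ => mF (Ioc (b - (n+1)) b)) atTop (𝓝 (mF (Iic b))) := by
    have := tendsto_measure_iUnion_atTop (μ := mF) hmono
    rwa [← hU] at this
  have h2 : Tendsto (fun n : ℕ => mF (Ioc (b - (n+1)) b)) atTop (𝓝 (ENNReal.ofReal (F b))) := by
    have heq : ∀ n : ℕ, mF (Ioc (b - (n+1)) b) = ENNReal.ofReal (F b - F (b - (n+1))) := by
      intro n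
      exact hmF _ _ (by linarith [Nat.cast_nonneg (α := ℝ) n])
    simp_rw [heq]
    have htb : Tendsto (fun n : ℕ => F (b - (n+1))) atTop (𝓝 0) := by
      apply hF.tendsto_atBot.comp
      have h := tendsto_natCast_atTop_atTop (R := ℝ)
      have h2 : Tendsto (fun n : ℕ => (n:ℝ) + 1) atTop atTop := tendsto_atTop_add_const_right _ 1 h
      have h3 : Tendsto (fun n : ℕ => -((n:ℝ) + 1)) atTop atBot := tendsto_neg_atBot_iff.2 h2
      have h4 := tendsto_atBot_add_const_left atTop b h3
      simpa [sub_eq_add_neg] using h4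
    have : Tendsto (fun n : ℕ => F b - F (b - (n+1))) atTop (𝓝 (F b - 0)) :=
      tendsto_const_nhds.sub htb
    rw [sub_zero] at this
    exact (ENNReal.continuous_ofReal.tendsto _).comp this
  exact tendsto_nhds_unique h1 h2

lemma mF_univ (hF : IsCDF F) (hmF : IsLSR F mF) : mF univ = 1 := by
  have hU : (univ : Set ℝ) = ⋃ n : ℕ, Iic (n:ℝ) := by
    ext t; simp only [mem_univ, mem_iUnion, mem_Iic, true_iff]
    rcases exists_nat_gt t with ⟨n, hn⟩; exact ⟨n, hn.le⟩
  have hmono : Monotone fun n : ℕ => (Iic (n:ℝ)) := fun m n hmn => Iic_subset_Iic.2 (Nat.cast_le.2 hmn)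
  have h1 : Tendsto (fun n : ℕ => mF (Iic n)) atTop (𝓝 (mF univ)) := by
    have := tendsto_measure_iUnion_atTop (μ := mF) hmono
    rwa [← hU] at this
  have h2 : Tendsto (fun n : ℕ => mF (Iic (n:ℝ))) atTop (𝓝 1) := by
    simp_rw [mF_Iic hF hmF]
    have : Tendsto (fun n : ℕ => F n) atTop (𝓝 1) :=
      hF.tendsto_atTop.comp tendsto_natCast_atTop_atTop
    have := (ENNReal.continuous_ofReal.tendsto _).comp this
    simpa [Function.comp_def] using this
  exact tendsto_nhds_unique h1 h2

lemma lint_ind (μ : Measure ℝ) {s u : Set ℝ} (hs : MeasurableSet s) :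
    ∫⁻ a in u, s.indicator (fun _ => (1:ℝ≥0∞)) a ∂μ = μ (s ∩ u) := by
  rw [show (fun _ : ℝ => (1:ℝ≥0∞)) = 1 from rfl, lintegral_indicator_one hs,
    Measure.restrict_apply hs]

lemma vol_cap {c : ℝ} (h0 : 0 ≤ c) (h1 : c ≤ 1) :
    volume (Iic c ∩ Ioo 0 1) = ENNReal.ofReal c := by
  rcases lt_or_ge c 1 with h | h
  · have he : Iic c ∩ Ioo 0 1 = Ioc 0 c := by
      ext y
      simp only [mem_inter_iff, mem_Iic, mem_Ioo, mem_Ioc]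
      constructor
      · rintro ⟨h1, h2, h3⟩; exact ⟨h2, h1⟩
      · rintro ⟨h2, h1⟩; exact ⟨h1, h2, lt_of_le_of_lt h1 h⟩
    rw [he, Real.volume_Ioc, sub_zero]
  · have hc : c = 1 := le_antisymm h1 h
    subst hc
    have he : Iic (1:ℝ) ∩ Ioo 0 1 = Ioo 0 1 :=
      inter_eq_self_of_subset_right (fun y hy => le_of_lt hy.2)
    rw [he, Real.volume_Ioo, sub_zero]

lemma vol_cap' {c : ℝ} (h0 : 0 ≤ c) (h1 : c ≤ 1) :
    volume (Ioi c ∩ Ioo 0 1) = ENNReal.ofReal (1 - c) := by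
  have he : Ioi c ∩ Ioo 0 1 = Ioo c 1 := by
    ext y
    simp only [mem_inter_iff, mem_Ioi, mem_Ioo]
    constructor
    · rintro ⟨h1, h2, h3⟩; exact ⟨h1, h3⟩
    · rintro ⟨hy, h3⟩; exact ⟨hy, lt_of_le_of_lt h0 hy, h3⟩
  rw [he, Real.volume_Ioo]

/-- pointwise: `ofReal (F t)` as a measure of a slice of `(0,1)` -/
lemma slice1 (hF : IsCDF F) (t : ℝ) :
    ∫⁻ α in Ioo 0 1, (if α ≤ F t then (1:ℝ≥0∞) else 0) = ENNReal.ofReal (F t) := by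
  have h1 : ∀ α : ℝ, (if α ≤ F t then (1:ℝ≥0∞) else 0)
      = (Iic (F t)).indicator (fun _ => (1:ℝ≥0∞)) α := by
    intro α; simp [indicator_apply, mem_Iic]
  rw [lintegral_congr h1, lint_ind volume measurableSet_Iic,
    vol_cap (cdf_nonneg hF t) (cdf_le_one hF t)]

/-- pointwise: slice in `t` over a set `u`, for `α ∈ (0,1)`. -/
lemma slice2 (hF : IsCDF F) {α : ℝ} (hα : α ∈ Ioo (0:ℝ) 1) (u : Set ℝ) :
    ∫⁻ t in u, (if α ≤ F t then (1:ℝ≥0∞) else 0) = volume (Ici (qf F α) ∩ u) := by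
  have h1 : ∀ t : ℝ, (if α ≤ F t then (1:ℝ≥0∞) else 0)
      = (Ici (qf F α)).indicator (fun _ => (1:ℝ≥0∞)) t := by
    intro t
    simp only [indicator_apply, mem_Ici]
    exact (if_congr (qf_le_iff hF hα) rfl rfl).symm
  rw [lintegral_congr h1, lint_ind volume measurableSet_Ici]

lemma swap_f (hF : IsCDF F) (u v : Set ℝ) :
    ∫⁻ t in u, ∫⁻ α in v, (if α ≤ F t then (1:ℝ≥0∞) else 0)
      = ∫⁻ α in v, ∫⁻ t in u, (if α ≤ F t then (1:ℝ≥0∞) else 0) := by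
  apply lintegral_lintegral_swap
  apply Measurable.aemeasurable
  exact Measurable.ite (measurableSet_le measurable_snd (hF.mono.measurable.comp measurable_fst))
    measurable_const measurable_const

/-- key identity, lintegral form -/
lemma key_lin (hF : IsCDF F) (x : ℝ) :
    ∫⁻ t in Iic x, ENNReal.ofReal (F t) = ∫⁻ α in Ioo 0 1, ENNReal.ofReal (x - qf F α) := by
  calc ∫⁻ t in Iic x, ENNReal.ofReal (F t)
      = ∫⁻ t in Iic x, ∫⁻ α in Ioo 0 1, (if α ≤ F t then (1:ℝ≥0∞) else 0) := by
        exact lintegral_congr fun t => (slice1 hF t).symm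
    _ = ∫⁻ α in Ioo 0 1, ∫⁻ t in Iic x, (if α ≤ F t then (1:ℝ≥0∞) else 0) := swap_f hF _ _
    _ = ∫⁻ α in Ioo 0 1, ENNReal.ofReal (x - qf F α) := by
        apply setLIntegral_congr_fun measurableSet_Ioo
        intro α hα
        dsimp only
        rw [slice2 hF hα, Ici_inter_Iic, Real.volume_Icc]

lemma mF_fin (hF : IsCDF F) (hmF : IsLSR F mF) : IsFiniteMeasure mF :=
  ⟨by rw [mF_univ hF hmF]; exact ENNReal.one_lt_top⟩

lemma mF_Ioi (hF : IsCDF F) (hmF : IsLSR F mF) (t : ℝ) :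
    mF (Ioi t) = ENNReal.ofReal (1 - F t) := by
  have := mF_fin hF hmF
  have h1 : Ioi t = (Iic t)ᶜ := compl_Iic.symm
  rw [h1, measure_compl measurableSet_Iic (measure_ne_top mF _), mF_univ hF hmF,
    mF_Iic hF hmF, ENNReal.ofReal_sub 1 (cdf_nonneg hF t), ENNReal.ofReal_one]

/-- negative-part tail bound -/
lemma neg_tail (hF : IsCDF F) (hmF : IsLSR F mF) :
    ∫⁻ α in Ioo 0 1, ENNReal.ofReal (-(qf F α)) ≤ ∫⁻ s, ENNReal.ofReal |s| ∂mF := by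
  have := mF_fin hF hmF
  have step1 : ∫⁻ α in Ioo 0 1, ENNReal.ofReal (-(qf F α))
      = ∫⁻ t in Iio 0, ENNReal.ofReal (F t) := by
    calc ∫⁻ α in Ioo 0 1, ENNReal.ofReal (-(qf F α))
        = ∫⁻ α in Ioo 0 1, ∫⁻ t in Iio (0:ℝ), (if α ≤ F t then (1:ℝ≥0∞) else 0) := by
          apply setLIntegral_congr_fun measurableSet_Ioo
          intro α hα
          dsimp only
          rw [slice2 hF hα, Ici_inter_Iio, Real.volume_Ico, zero_sub]
      _ = ∫⁻ t in Iio 0, ∫⁻ α in Ioo (0:ℝ) 1, (if α ≤ F t then (1:ℝ≥0∞) else 0) :=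
          (swap_f hF _ _).symm
      _ = ∫⁻ t in Iio 0, ENNReal.ofReal (F t) := lintegral_congr fun t => slice1 hF t
  have step2 : ∫⁻ t in Iio (0:ℝ), ENNReal.ofReal (F t)
      = ∫⁻ s, volume (Ici s ∩ Iio 0) ∂mF := by
    calc ∫⁻ t in Iio (0:ℝ), ENNReal.ofReal (F t)
        = ∫⁻ t in Iio (0:ℝ), ∫⁻ s, (if s ≤ t then (1:ℝ≥0∞) else 0) ∂mF := by
          apply lintegral_congr
          intro t
          rw [← mF_Iic hF hmF t, ← lintegral_indicator_one (μ := mF) measurableSet_Iic]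
          exact lintegral_congr fun s => by simp [indicator_apply, mem_Iic]
      _ = ∫⁻ s, (∫⁻ t in Iio (0:ℝ), (if s ≤ t then (1:ℝ≥0∞) else 0)) ∂mF := by
          exact lintegral_lintegral_swap (μ := volume.restrict (Iio (0:ℝ))) (ν := mF)
            (f := fun t s => if s ≤ t then (1:ℝ≥0∞) else 0)
            ((Measurable.ite (measurableSet_le measurable_snd measurable_fst)
              measurable_const measurable_const).aemeasurable)
      _ = ∫⁻ s, volume (Ici s ∩ Iio 0) ∂mF := by
          refine lintegral_congr fun s => ?_
          have h1 : ∀ t : ℝ, (if s ≤ t then (1:ℝ≥0∞) else 0)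
              = (Ici s).indicator (fun _ => (1:ℝ≥0∞)) t := by
            intro t; simp [indicator_apply, mem_Ici]
          rw [lintegral_congr h1, lint_ind volume measurableSet_Ici]
  rw [step1, step2]
  refine lintegral_mono fun s => ?_
  show volume (Ici s ∩ Iio 0) ≤ ENNReal.ofReal |s|
  rw [Ici_inter_Iio, Real.volume_Ico, zero_sub]
  exact ENNReal.ofReal_le_ofReal (neg_le_abs s)

/-- positive-part tail bound -/
lemma pos_tail (hF : IsCDF F) (hmF : IsLSR F mF) :
    ∫⁻ α in Ioo 0 1, ENNReal.ofReal (qf F α) ≤ ∫⁻ s, ENNReal.ofReal |s| ∂mF := by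
  have := mF_fin hF hmF
  have hFm : Measurable F := hF.mono.measurable
  have step1 : ∫⁻ α in Ioo 0 1, ENNReal.ofReal (qf F α)
      = ∫⁻ t in Ici 0, ENNReal.ofReal (1 - F t) := by
    calc ∫⁻ α in Ioo 0 1, ENNReal.ofReal (qf F α)
        = ∫⁻ α in Ioo 0 1, ∫⁻ t in Ici (0:ℝ), (if F t < α then (1:ℝ≥0∞) else 0) := by
          apply setLIntegral_congr_fun measurableSet_Ioo
          intro α hα
          dsimp only
          have h1 : ∀ t : ℝ, (if F t < α then (1:ℝ≥0∞) else 0)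
              = ({t : ℝ | F t < α}).indicator (fun _ => (1:ℝ≥0∞)) t := by
            intro t; simp [indicator_apply]
          rw [lintegral_congr h1,
            lint_ind volume (show MeasurableSet {t : ℝ | F t < α} from hFm measurableSet_Iio)]
          have he : {t : ℝ | F t < α} ∩ Ici 0 = Ico 0 (qf F α) := by
            ext t
            simp only [mem_inter_iff, mem_setOf_eq, mem_Ici, mem_Ico]
            constructor
            · rintro ⟨h1, h2⟩
              refine ⟨h2, ?_⟩
              by_contra h
              exact absurd ((qf_le_iff hF hα).1 (le_of_not_gt h)) (not_le.2 h1)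
            · rintro ⟨h2, h1⟩
              refine ⟨?_, h2⟩
              by_contra h
              exact absurd ((qf_le_iff hF hα).2 (le_of_not_gt h)) (not_le.2 h1)
          rw [he, Real.volume_Ico, sub_zero]
      _ = ∫⁻ t in Ici 0, ∫⁻ α in Ioo (0:ℝ) 1, (if F t < α then (1:ℝ≥0∞) else 0) := by
          exact (lintegral_lintegral_swap (μ := volume.restrict (Ici (0:ℝ)))
            (ν := volume.restrict (Ioo (0:ℝ) 1))
            (f := fun t α => if F t < α then (1:ℝ≥0∞) else 0)
            ((Measurable.ite (measurableSet_lt (hFm.comp measurable_fst) measurable_snd)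
              measurable_const measurable_const).aemeasurable)).symm
      _ = ∫⁻ t in Ici 0, ENNReal.ofReal (1 - F t) := by
          refine lintegral_congr fun t => ?_
          have h1 : ∀ α : ℝ, (if F t < α then (1:ℝ≥0∞) else 0)
              = (Ioi (F t)).indicator (fun _ => (1:ℝ≥0∞)) α := by
            intro α; simp [indicator_apply, mem_Ioi]
          rw [lintegral_congr h1, lint_ind volume measurableSet_Ioi,
            vol_cap' (cdf_nonneg hF t) (cdf_le_one hF t)]
  have step2 : ∫⁻ t in Ici (0:ℝ), ENNReal.ofReal (1 - F t)
      = ∫⁻ s, volume (Iio s ∩ Ici 0) ∂mF := by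
    calc ∫⁻ t in Ici (0:ℝ), ENNReal.ofReal (1 - F t)
        = ∫⁻ t in Ici (0:ℝ), ∫⁻ s, (if t < s then (1:ℝ≥0∞) else 0) ∂mF := by
          apply lintegral_congr
          intro t
          rw [← mF_Ioi hF hmF t, ← lintegral_indicator_one (μ := mF) measurableSet_Ioi]
          exact lintegral_congr fun s => by simp [indicator_apply, mem_Ioi]
      _ = ∫⁻ s, (∫⁻ t in Ici (0:ℝ), (if t < s then (1:ℝ≥0∞) else 0)) ∂mF := by
          exact lintegral_lintegral_swap (μ := volume.restrict (Ici (0:ℝ))) (ν := mF)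
            (f := fun t s => if t < s then (1:ℝ≥0∞) else 0)
            ((Measurable.ite (measurableSet_lt measurable_fst measurable_snd)
              measurable_const measurable_const).aemeasurable)
      _ = ∫⁻ s, volume (Iio s ∩ Ici 0) ∂mF := by
          refine lintegral_congr fun s => ?_
          have h1 : ∀ t : ℝ, (if t < s then (1:ℝ≥0∞) else 0)
              = (Iio s).indicator (fun _ => (1:ℝ≥0∞)) t := by
            intro t; simp [indicator_apply, mem_Iio]
          rw [lintegral_congr h1, lint_ind volume measurableSet_Iio]
  rw [step1, step2]
  refine lintegral_mono fun s => ?_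
  show volume (Iio s ∩ Ici 0) ≤ ENNReal.ofReal |s|
  rw [inter_comm, Ici_inter_Iio, Real.volume_Ico, sub_zero]
  exact ENNReal.ofReal_le_ofReal (le_abs_self s)

lemma ofReal_abs' (a : ℝ) :
    ENNReal.ofReal |a| = ENNReal.ofReal a + ENNReal.ofReal (-a) := by
  rcases le_total a 0 with h | h
  · rw [abs_of_nonpos h, ENNReal.ofReal_of_nonpos h, zero_add]
  · rw [abs_of_nonneg h, ENNReal.ofReal_of_nonpos (neg_nonpos.2 h), add_zero]

lemma qf_aem (hF : IsCDF F) :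
    AEMeasurable (qf F) (volume.restrict (Ioo 0 1)) := by
  refine (qfz_meas hF).aemeasurable.congr ?_
  rw [EventuallyEq, ae_restrict_iff' measurableSet_Ioo]
  exact ae_of_all _ fun α hα => qfz_eq α hα

lemma qf_int (hF : IsCDF F) (hmF : IsLSR F mF)
    (hmean : ∫⁻ s, ENNReal.ofReal |s| ∂mF < ⊤) :
    IntegrableOn (qf F) (Ioo 0 1) := by
  refine ⟨(qf_aem hF).aestronglyMeasurable, ?_⟩
  rw [hasFiniteIntegral_iff_norm]
  have h1 : ∀ α : ℝ, ENNReal.ofReal ‖qf F α‖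
      = ENNReal.ofReal (qf F α) + ENNReal.ofReal (-(qf F α)) := by
    intro α; rw [Real.norm_eq_abs, ofReal_abs']
  rw [lintegral_congr h1, lintegral_add_left' ((qf_aem hF).ennreal_ofReal)]
  exact ENNReal.add_lt_top.2 ⟨lt_of_le_of_lt (pos_tail hF hmF) hmean,
    lt_of_le_of_lt (neg_tail hF hmF) hmean⟩

lemma G_lt_top (hF : IsCDF F) (hmF : IsLSR F mF)
    (hmean : ∫⁻ s, ENNReal.ofReal |s| ∂mF < ⊤) (x : ℝ) :
    ∫⁻ t in Iic x, ENNReal.ofReal (F t) < ⊤ := by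
  rw [key_lin hF x]
  have h1 : ∀ α : ℝ, ENNReal.ofReal (x - qf F α)
      ≤ ENNReal.ofReal |x| + ENNReal.ofReal (-(qf F α)) := by
    intro α
    refine le_trans (ENNReal.ofReal_le_ofReal ?_) (ENNReal.ofReal_add_le)
    have := le_abs_self x
    have := neg_le_abs (qf F α)
    nlinarith [abs_nonneg x, abs_nonneg (qf F α), le_abs_self x, neg_le_abs (qf F α)]
  refine lt_of_le_of_lt (lintegral_mono h1) ?_
  rw [lintegral_add_left measurable_const]
  refine ENNReal.add_lt_top.2 ⟨?_, lt_of_le_of_lt (neg_tail hF hmF) hmean⟩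
  rw [setLIntegral_const]
  exact ENNReal.mul_lt_top ENNReal.ofReal_lt_top
    (lt_of_le_of_lt (measure_mono (Ioo_subset_Icc_self)) (by rw [Real.volume_Icc]; exact ENNReal.ofReal_lt_top))

lemma F_intOn (hF : IsCDF F) (hmF : IsLSR F mF)
    (hmean : ∫⁻ s, ENNReal.ofReal |s| ∂mF < ⊤) (x : ℝ) :
    IntegrableOn F (Iic x) := by
  refine ⟨hF.mono.measurable.aestronglyMeasurable.restrict, ?_⟩
  rw [hasFiniteIntegral_iff_ofReal (ae_of_all _ fun t => cdf_nonneg hF t)]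
  exact G_lt_top hF hmF hmean x

lemma ofReal_max0 (a : ℝ) : ENNReal.ofReal (max a 0) = ENNReal.ofReal a := by
  rcases le_total a 0 with h | h
  · rw [max_eq_right h, ENNReal.ofReal_zero, ENNReal.ofReal_of_nonpos h]
  · rw [max_eq_left h]

lemma max_aem (hF : IsCDF F) (x : ℝ) :
    AEMeasurable (fun α => max (x - qf F α) 0) (volume.restrict (Ioo 0 1)) :=
  (aemeasurable_const.sub (qf_aem hF)).max aemeasurable_const

lemma max_int (hF : IsCDF F) (hmF : IsLSR F mF)
    (hmean : ∫⁻ s, ENNReal.ofReal |s| ∂mF < ⊤) (x : ℝ) :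
    IntegrableOn (fun α => max (x - qf F α) 0) (Ioo 0 1) := by
  have hg : IntegrableOn (fun α => |x| + |qf F α|) (Ioo 0 1) := by
    refine Integrable.add ?_ (qf_int hF hmF hmean).abs
    exact integrableOn_const (by rw [Real.volume_Ioo]; exact ENNReal.ofReal_ne_top)
  refine Integrable.mono hg (max_aem hF x).aestronglyMeasurable (ae_of_all _ fun α => ?_)
  rw [Real.norm_eq_abs, Real.norm_eq_abs]
  rw [abs_of_nonneg (le_max_right _ _), abs_of_nonneg (by positivity)]
  rcases le_total (x - qf F α) 0 with h | h
  · rw [max_eq_right h]; positivity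
  · rw [max_eq_left h]
    have h1 := le_abs_self x
    have h2 := neg_le_abs (qf F α)
    linarith

lemma key_real (hF : IsCDF F) (hmF : IsLSR F mF)
    (hmean : ∫⁻ s, ENNReal.ofReal |s| ∂mF < ⊤) (x : ℝ) :
    ∫ t in Iic x, F t = ∫ α in Ioo 0 1, max (x - qf F α) 0 := by
  have h2 : ∫ α in Ioo (0:ℝ) 1, max (x - qf F α) 0
      = (∫⁻ α in Ioo (0:ℝ) 1, ENNReal.ofReal (max (x - qf F α) 0)).toReal :=
    integral_eq_lintegral_of_nonneg_ae (ae_of_all _ fun α => le_max_right _ _)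
      (max_aem hF x).aestronglyMeasurable
  rw [integral_eq_lintegral_of_nonneg_ae (ae_of_all _ fun t => cdf_nonneg hF t)
    hF.mono.measurable.aestronglyMeasurable.restrict, h2]
  congr 1
  rw [key_lin hF x]
  exact (lintegral_congr fun α => (ofReal_max0 _).symm)

lemma px_le (hF : IsCDF F) (hmF : IsLSR F mF)
    (hmean : ∫⁻ s, ENNReal.ofReal |s| ∂mF < ⊤) {p : ℝ} (hp : p ∈ Icc (0:ℝ) 1) (x : ℝ) :
    p * x ≤ (∫ t in Iic x, F t) + ∫ α in Ioo 0 p, qf F α := by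
  have hsub : Ioo (0:ℝ) p ⊆ Ioo 0 1 := Ioo_subset_Ioo le_rfl hp.2
  have hqint : IntegrableOn (qf F) (Ioo 0 p) := (qf_int hF hmF hmean).mono_set hsub
  have hMint1 : IntegrableOn (fun α => max (x - qf F α) 0) (Ioo 0 1) := max_int hF hmF hmean x
  have hMint : IntegrableOn (fun α => max (x - qf F α) 0) (Ioo 0 p) := hMint1.mono_set hsub
  have h1 : p * x = ∫ _ in Ioo (0:ℝ) p, x := by
    rw [setIntegral_const, Real.volume_real_Ioo_of_le hp.1, sub_zero, smul_eq_mul]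
  rw [h1, key_real hF hmF hmean x]
  calc ∫ _ in Ioo (0:ℝ) p, x
      ≤ ∫ α in Ioo (0:ℝ) p, (max (x - qf F α) 0 + qf F α) := by
        refine integral_mono ?_ (hMint.add hqint) fun α => ?_
        · exact integrableOn_const (by rw [Real.volume_Ioo]; exact ENNReal.ofReal_ne_top)
        · have := le_max_left (x - qf F α) 0
          simp only []
          linarith
    _ = (∫ α in Ioo (0:ℝ) p, max (x - qf F α) 0) + ∫ α in Ioo 0 p, qf F α :=
        integral_add hMint hqint
    _ ≤ (∫ α in Ioo (0:ℝ) 1, max (x - qf F α) 0) + ∫ α in Ioo 0 p, qf F α := by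
        refine add_le_add_left ?_ _
        refine setIntegral_mono_set hMint1 (ae_of_all _ fun α => le_max_right _ _) ?_
        exact HasSubset.Subset.eventuallyLE hsub

lemma px_eq (hF : IsCDF F) (hmF : IsLSR F mF)
    (hmean : ∫⁻ s, ENNReal.ofReal |s| ∂mF < ⊤) {p x : ℝ} (hp : p ∈ Icc (0:ℝ) 1)
    (hcond : ∀ α ∈ Ioo (0:ℝ) 1, (α < p → qf F α ≤ x) ∧ (p < α → x ≤ qf F α)) :
    p * x = (∫ t in Iic x, F t) + ∫ α in Ioo 0 p, qf F α := by
  have hsub : Ioo (0:ℝ) p ⊆ Ioo 0 1 := Ioo_subset_Ioo le_rfl hp.2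
  have hqint : IntegrableOn (qf F) (Ioo 0 p) := (qf_int hF hmF hmean).mono_set hsub
  have hconst : IntegrableOn (fun _ : ℝ => x) (Ioo 0 p) :=
    integrableOn_const (by rw [Real.volume_Ioo]; exact ENNReal.ofReal_ne_top)
  have hra : ∀ᵐ (α : ℝ), α ≠ p := by
    rw [ae_iff]
    have h0 : {α : ℝ | ¬ α ≠ p} = {p} := by ext α; simp [not_not]
    rw [h0]
    exact Real.volume_singleton
  have key : ∫ α in Ioo (0:ℝ) 1, max (x - qf F α) 0 = ∫ α in Ioo 0 p, (x - qf F α) := by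
    have h1 : ∫ α in Ioo (0:ℝ) 1, max (x - qf F α) 0
        = ∫ α in Ioo (0:ℝ) 1, (Ioo (0:ℝ) p).indicator (fun α => x - qf F α) α := by
      refine setIntegral_congr_ae measurableSet_Ioo ?_
      filter_upwards [hra] with α hne hα
      rcases lt_or_gt_of_ne hne with h | h
      · have hmem : α ∈ Ioo (0:ℝ) p := ⟨hα.1, h⟩
        rw [indicator_of_mem hmem]
        exact max_eq_left (by linarith [(hcond α hα).1 h])
      · have hmem : α ∉ Ioo (0:ℝ) p := fun hm => absurd hm.2 (not_lt.2 h.le)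
        rw [indicator_of_notMem hmem]
        exact max_eq_right (by linarith [(hcond α hα).2 h])
    rw [h1, setIntegral_indicator measurableSet_Ioo,
      inter_eq_self_of_subset_right hsub]
  rw [key_real hF hmF hmean x, key, integral_sub hconst hqint, setIntegral_const,
    Real.volume_real_Ioo_of_le hp.1, sub_zero, smul_eq_mul]
  ring


/-- **SSD ⇔ weak Lorenz ordering.**  Let `F₁, F₂` be cdf's with finite
means.  Then `∫_{-∞}^{x} F₁(t) dt ≥ ∫_{-∞}^{x} F₂(t) dt` for all `x ∈ ℝ` iff
`∫_0^p F₁⁻¹(α) dα ≤ ∫_0^p F₂⁻¹(α) dα` for all `p ∈ [0,1]` (integrals with respect to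
Lebesgue measure). -/
theorem ssd_iff_weak_lorenz
    (F₁ F₂ : ℝ → ℝ) (hF₁ : IsCDF F₁) (hF₂ : IsCDF F₂)
    (mF₁ mF₂ : Measure ℝ) (hmF₁ : IsLSR F₁ mF₁) (hmF₂ : IsLSR F₂ mF₂)
    (hmean₁ : ∫⁻ x, ENNReal.ofReal |x| ∂mF₁ < ⊤)
    (hmean₂ : ∫⁻ x, ENNReal.ofReal |x| ∂mF₂ < ⊤) :
    (∀ x : ℝ, ∫ t in Iic x, F₂ t ≤ ∫ t in Iic x, F₁ t) ↔
    (∀ p ∈ Icc (0:ℝ) 1,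
      ∫ α in Ioo 0 p, qf F₁ α ≤ ∫ α in Ioo 0 p, qf F₂ α) := by
  constructor
  · intro hssd p hp
    have main : ∀ q : ℝ, 0 ≤ q → q < 1 →
        ∫ α in Ioo 0 q, qf F₁ α ≤ ∫ α in Ioo 0 q, qf F₂ α := by
      intro q hq0 hq1
      rcases eq_or_lt_of_le hq0 with h0 | h0
      · rw [← h0]; simp
      · set x := qf F₁ q with hx
        have hq : q ∈ Icc (0:ℝ) 1 := ⟨hq0, hq1.le⟩
        have hqmem : q ∈ Ioo (0:ℝ) 1 := ⟨h0, hq1⟩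
        have hcond : ∀ α ∈ Ioo (0:ℝ) 1,
            (α < q → qf F₁ α ≤ x) ∧ (q < α → x ≤ qf F₁ α) := fun α hα =>
          ⟨fun h => qf_mono hF₁ hα hqmem h.le, fun h => qf_mono hF₁ hqmem hα h.le⟩
        have e1 := px_eq hF₁ hmF₁ hmean₁ hq hcond
        have i2 := px_le hF₂ hmF₂ hmean₂ hq x
        have hG := hssd x
        linarith
    rcases eq_or_lt_of_le hp.2 with h1 | h1
    · rw [h1]
      set s : ℕ → Set ℝ := fun n => Ioo 0 (1 - 1/(n+1)) with hs
      have hsm : ∀ n, MeasurableSet (s n) := fun n => measurableSet_Ioo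
      have hmono : Monotone s := by
        intro m n hmn
        have hc : ((m:ℝ)+1) ≤ ((n:ℝ)+1) := add_le_add_left (Nat.cast_le.2 hmn) 1
        have h2 : (1:ℝ)/((n:ℝ)+1) ≤ 1/((m:ℝ)+1) := one_div_le_one_div_of_le (by positivity) hc
        exact Ioo_subset_Ioo le_rfl (by linarith)
      have hU : ⋃ n, s n = Ioo (0:ℝ) 1 := by
        ext α
        simp only [mem_iUnion, mem_Ioo, hs]
        constructor
        · rintro ⟨n, h2, h3⟩
          have hpos : (0:ℝ) < 1/((n:ℝ)+1) := by positivity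
          exact ⟨h2, by linarith⟩
        · rintro ⟨h2, h3⟩
          obtain ⟨n, hn⟩ := exists_nat_one_div_lt (show (0:ℝ) < 1 - α by linarith)
          exact ⟨n, h2, by push_cast at hn ⊢; linarith⟩
      have t1 := tendsto_setIntegral_of_monotone (f := qf F₁) hsm hmono
        (by rw [hU]; exact qf_int hF₁ hmF₁ hmean₁)
      have t2 := tendsto_setIntegral_of_monotone (f := qf F₂) hsm hmono
        (by rw [hU]; exact qf_int hF₂ hmF₂ hmean₂)
      rw [hU] at t1 t2
      refine le_of_tendsto_of_tendsto' t1 t2 fun n => ?_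
      have hle1 : (1:ℝ)/((n:ℝ)+1) ≤ 1 := by
        rw [div_le_one (by positivity)]
        linarith [Nat.cast_nonneg (α := ℝ) n]
      have hpos : (0:ℝ) < 1/((n:ℝ)+1) := by positivity
      exact main _ (by linarith) (by linarith)
    · exact main p hp.1 h1
  · intro hlor x
    set p := F₂ x with hpdef
    have hp : p ∈ Icc (0:ℝ) 1 := ⟨cdf_nonneg hF₂ x, cdf_le_one hF₂ x⟩
    have hcond : ∀ α ∈ Ioo (0:ℝ) 1,
        (α < p → qf F₂ α ≤ x) ∧ (p < α → x ≤ qf F₂ α) := by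
      intro α hα
      refine ⟨fun h => (qf_le_iff hF₂ hα).2 h.le, fun h => ?_⟩
      by_contra hc
      push_neg at hc
      exact absurd ((qf_le_iff hF₂ hα).1 hc.le) (not_le.2 h)
    have e2 := px_eq hF₂ hmF₂ hmean₂ hp hcond
    have i1 := px_le hF₁ hmF₁ hmean₁ hp x
    have hL := hlor p hp
    linarith


end
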